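/- With the notation of truncations T^{≤t}(ℓ) of a reduced word for an element of the affine symmetric group (associated to an efficiently filled k-core tableau T), for any ℓ_1 > ℓ_2 the quantity ⌊(T^{≤t}(ℓ_1) − T^{≤t}(ℓ_2))/k⌋ is a non-decreasing function of t. In particular T^{≤t}(ℓ_1) > T^{≤t}(ℓ_2) whenever ℓ_1 > ℓ_2, i.e. the truncations remain sorted. -/

import Mathlib

private lemma ediv_sub_one_eq {d k : ℤ} (hk : 0 < k) (hd : d % k ≠ 0) :
    (d - 1) / k = d / k := by
  have h0 : 0 ≤ d % k := Int.emod_nonneg d hk.ne'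
  have h1 : d % k < k := Int.emod_lt_of_pos d hk
  have h2 : k * (d / k) + d % k = d := Int.mul_ediv_add_emod d k
  exact ((Int.ediv_emod_unique (a := d - 1) (r := d % k - 1) (q := d / k) hk).mpr
    ⟨by linarith, by omega, by omega⟩).1

/-- Proposition `main_ants`: for the truncations `T^{≤t}(ℓ)` of a reduced
word in the affine symmetric group (starting from `T^{≤0}(ℓ) = ℓ`, with distinct residues
mod `k` at all times, each step being either the identity or a genuine transposition
increasing one value by 1 and decreasing another by 1 subject to the addable-corner
constraint of equation (sort-0)), for any `ℓ₁ > ℓ₂` the quantity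
`⌊(T^{≤t}(ℓ₁) − T^{≤t}(ℓ₂))/k⌋` is non-decreasing in `t`; in particular the truncations
remain sorted: `T^{≤t}(ℓ₁) > T^{≤t}(ℓ₂)` whenever `ℓ₁ > ℓ₂`. -/
theorem truncations_floor_monotone_and_sorted
    (k : ℕ) (hk : 1 ≤ k) (g : ℕ) (T : ℕ → Fin k → ℤ)
    (hT0 : ∀ ℓ : Fin k, T 0 ℓ = (ℓ : ℤ) + 1)
    (hdist : ∀ t : ℕ, t ≤ g → ∀ ℓ1 ℓ2 : Fin k, ℓ1 ≠ ℓ2 →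
      ¬ (T t ℓ1 ≡ T t ℓ2 [ZMOD (k : ℤ)]))
    (hstep : ∀ t : ℕ, 1 ≤ t → t ≤ g →
      (∀ ℓ : Fin k, T t ℓ = T (t - 1) ℓ) ∨
      ∃ lm lp : Fin k, lm ≠ lp ∧
        T t lp = T (t - 1) lp + 1 ∧
        T t lm = T (t - 1) lm - 1 ∧
        (∀ ℓ : Fin k, ℓ ≠ lm → ℓ ≠ lp → T t ℓ = T (t - 1) ℓ) ∧
        T (t - 1) lm ≤ T (t - 1) lp - ((k : ℤ) - 1)) :
    ∀ ℓ1 ℓ2 : Fin k, ℓ2 < ℓ1 →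
      (∀ s t : ℕ, s ≤ t → t ≤ g →
        Int.fdiv (T s ℓ1 - T s ℓ2) (k : ℤ) ≤ Int.fdiv (T t ℓ1 - T t ℓ2) (k : ℤ)) ∧
      (∀ t : ℕ, t ≤ g → T t ℓ2 < T t ℓ1) := by
  have hk0 : (0 : ℤ) < (k : ℤ) := by exact_mod_cast hk
  -- differences of distinct entries are nonzero mod k
  have hmod : ∀ t, t ≤ g → ∀ a b : Fin k, a ≠ b → (T t a - T t b) % (k : ℤ) ≠ 0 := by
    intro t ht a b hab hc
    exact hdist t ht a b hab (Int.emod_eq_emod_iff_emod_sub_eq_zero.mpr hc)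
  -- single-step monotonicity of the (euclidean = floor, since k > 0) quotient
  have step : ∀ n, n + 1 ≤ g →
      (∀ a b : Fin k, b < a → T n b < T n a) →
      ∀ a b : Fin k, b < a →
        (T n a - T n b) / (k : ℤ) ≤ (T (n + 1) a - T (n + 1) b) / (k : ℤ) := by
    intro n hn hsorted a b hba
    have hn' : n ≤ g := by omega
    have hab : a ≠ b := Fin.ne_of_gt hba
    rcases hstep (n + 1) (by omega) hn with hid | ⟨u, v, hne, hp, hm, hoth, hcon⟩
    · simp only [Nat.add_sub_cancel] at hid
      rw [hid a, hid b]
    · simp only [Nat.add_sub_cancel] at hp hm hoth hcon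
      have hvne : T n u ≠ T n v := by
        intro h
        exact hmod n hn' u v hne (by rw [h]; simp)
      have hanb : T n u < T n v := by omega
      have hlml : u < v := by
        rcases lt_trichotomy u v with h | h | h
        · exact h
        · exact absurd h hne
        · exact absurd (hsorted u v h) (by omega)
      by_cases hap : a = v
      · subst hap
        by_cases hbm : b = u
        · subst hbm
          rw [hp, hm]
          exact Int.ediv_le_ediv hk0 (by omega)
        · have hbp : b ≠ a := Fin.ne_of_lt hba
          rw [hp, hoth b hbm hbp]
          exact Int.ediv_le_ediv hk0 (by omega)
      · by_cases ham : a = u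
        · subst ham
          have hbm : b ≠ a := Fin.ne_of_lt hba
          have hbp : b ≠ v := by
            intro h
            subst h
            exact absurd hlml (lt_asymm hba)
          rw [hm, hoth b hbm hbp,
            show T n a - 1 - T n b = (T n a - T n b) - 1 by ring,
            ediv_sub_one_eq hk0 (hmod n hn' a b (Ne.symm hbm))]
        · by_cases hbm : b = u
          · subst hbm
            rw [hoth a ham hap, hm]
            exact Int.ediv_le_ediv hk0 (by omega)
          · by_cases hbp : b = v
            · subst hbp
              rw [hoth a ham hap, hp,
                show T n a - (T n b + 1) = (T n a - T n b) - 1 by ring,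
                ediv_sub_one_eq hk0 (hmod n hn' a b hap)]
            · rw [hoth a ham hap, hoth b hbm hbp]
  -- joint induction: nonnegative quotient and sortedness at every time
  have main : ∀ t, t ≤ g → ∀ a b : Fin k, b < a →
      0 ≤ (T t a - T t b) / (k : ℤ) ∧ T t b < T t a := by
    intro t
    induction t with
    | zero =>
      intro _ a b hba
      rw [hT0, hT0]
      have : (b : ℕ) < (a : ℕ) := hba
      constructor
      · exact Int.ediv_nonneg (by omega) hk0.le
      · omega
    | succ n ih =>
      intro ht a b hba
      have hn' : n ≤ g := by omega
      have h1 := step n ht (fun a b h => (ih hn' a b h).2) a b hba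
      have hge : 0 ≤ (T (n + 1) a - T (n + 1) b) / (k : ℤ) :=
        le_trans (ih hn' a b hba).1 h1
      have hne0 : (T (n + 1) a - T (n + 1) b) % (k : ℤ) ≠ 0 :=
        hmod (n + 1) ht a b (Fin.ne_of_gt hba)
      have hpos : 0 < T (n + 1) a - T (n + 1) b := by
        rcases lt_trichotomy (T (n + 1) a - T (n + 1) b) 0 with h | h | h
        · exact absurd (Int.ediv_neg_of_neg_of_pos h hk0) (by omega)
        · exact absurd (by rw [h]; simp) hne0
        · exact h
      exact ⟨hge, by omega⟩
  intro ℓ1 ℓ2 hlt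
  refine ⟨?_, fun t ht => (main t ht ℓ1 ℓ2 hlt).2⟩
  intro s t hst
  induction t, hst using Nat.le_induction with
  | base => intro _; exact le_refl _
  | succ n hsn ih =>
    intro htg
    have hng : n ≤ g := by omega
    calc Int.fdiv (T s ℓ1 - T s ℓ2) (k : ℤ) ≤ Int.fdiv (T n ℓ1 - T n ℓ2) (k : ℤ) := ih hng
      _ ≤ Int.fdiv (T (n + 1) ℓ1 - T (n + 1) ℓ2) (k : ℤ) := by
          rw [Int.fdiv_eq_ediv_of_nonneg _ hk0.le, Int.fdiv_eq_ediv_of_nonneg _ hk0.le]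
          exact step n htg (fun a b h => (main n hng a b h).2) ℓ1 ℓ2 hlt
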